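/- Let ρ ∈ (0,1), a ≥ 2 an integer, and m a positive integer with m ≥ aρ/(1-ρ). Define g(a, ρ, m) = 1 - a·(∑_{i=0}^{m} ρ^i(1-ρ)·(i/m)) - a·ρ^{m+1}. Then g(a, ρ, m) ≥ 0. -/

import Mathlib

open Finset

lemma key_sum (ρ : ℝ) : ∀ m : ℕ,
    ∑ i ∈ range (m + 1), (i : ℝ) * ((1 - ρ) * ρ ^ i) + m * ρ ^ (m + 1)
      = (∑ k ∈ range (m + 1), ρ ^ k) - 1 := by
  intro m
  induction m with
  | zero => simp
  | succ n ih =>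
    rw [Finset.sum_range_succ, Finset.sum_range_succ (fun k => ρ ^ k)]
    push_cast
    rw [pow_succ ρ (n + 1)]
    linear_combination ih

/-- Zero-loss payment system: if `m ≥ aρ/(1-ρ)` then the deposit flux factor
`g(a, ρ, m)` is nonnegative. -/
theorem stmt_9 (ρ : ℝ) (h0 : 0 < ρ) (h1 : ρ < 1) (a : ℕ) (ha : 2 ≤ a)
    (m : ℕ) (hm : 1 ≤ m) (hdepth : (m : ℝ) ≥ a * ρ / (1 - ρ)) :
    1 - (a : ℝ) * (∑ i ∈ range (m + 1), ρ ^ i * (1 - ρ) * ((i : ℝ) / m)) -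
      (a : ℝ) * ρ ^ (m + 1) ≥ 0 := by
  have hmpos : (0 : ℝ) < m := by exact_mod_cast hm
  have h1ρ : (0 : ℝ) < 1 - ρ := by linarith
  have hrw : ∑ i ∈ range (m + 1), ρ ^ i * (1 - ρ) * ((i : ℝ) / m)
      = (∑ i ∈ range (m + 1), (i : ℝ) * ((1 - ρ) * ρ ^ i)) / m := by
    rw [Finset.sum_div]
    apply Finset.sum_congr rfl
    intro i _
    field_simp
  rw [hrw]
  have hkey := key_sum ρ m
  have hgeom : (1 - ρ) * ∑ k ∈ range (m + 1), ρ ^ k = 1 - ρ ^ (m + 1) := by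
    have := geom_sum_mul ρ (m + 1)
    nlinarith [this]
  have hρpow : 0 < ρ ^ (m + 1) := pow_pos h0 _
  have hdepth' : (a : ℝ) * ρ ≤ m * (1 - ρ) := by
    rw [ge_iff_le, div_le_iff₀ h1ρ] at hdepth; linarith
  have hapos : (0 : ℝ) < a := by positivity
  -- a * (∑ - 1) ≤ m
  have hfinal : (a : ℝ) * ((∑ k ∈ range (m + 1), ρ ^ k) - 1) ≤ m := by
    have hsb : ((∑ k ∈ range (m + 1), ρ ^ k) - 1) * (1 - ρ) ≤ ρ := by nlinarith
    nlinarith [hsb]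
  have hT : (a : ℝ) * ((∑ i ∈ range (m + 1), (i : ℝ) * ((1 - ρ) * ρ ^ i)) + m * ρ ^ (m + 1)) ≤ m := by
    rw [hkey]; linarith
  have h3 : ((a : ℝ) * (∑ i ∈ range (m + 1), (i : ℝ) * ((1 - ρ) * ρ ^ i))
      + a * (m * ρ ^ (m + 1))) / m ≤ 1 := by
    rw [div_le_one hmpos]; linarith
  have h4 : (a : ℝ) * ((∑ i ∈ range (m + 1), (i : ℝ) * ((1 - ρ) * ρ ^ i)) / m) + a * ρ ^ (m + 1)
      = ((a : ℝ) * (∑ i ∈ range (m + 1), (i : ℝ) * ((1 - ρ) * ρ ^ i)) + a * (m * ρ ^ (m + 1))) / m := by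
    rw [add_div, mul_div_assoc, mul_div_assoc, mul_div_cancel_left₀ _ hmpos.ne']
  linarith [h3, h4]
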